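/- Determinant lower bound for the compression of a positive diagonal matrix to the zero-sum hyperplane: let N≥2 and let D = diag(Λ₁,…,Λ_N) with Λ_k > 0 for all k. Let w₁,…,w_{N−1} be any orthonormal basis of the hyperplane V⁰_N = {x∈ℝ^N : ∑_k x_k = 0}, and let D|_{V⁰} be the (N−1)×(N−1) matrix with entries ⟨w_a, D w_b⟩. Then det(D|_{V⁰}) ≥ (Λ₁·Λ₂·⋯·Λ_N)^{(N−1)/N}. (The determinant is independent of the chosen orthonormal basis.) -/

import Mathlib

open Matrix Finset

/-- **Determinant lower bound for the compression of a positive diagonal matrix to the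
zero-sum hyperplane**: if `w₁,…,w_{N−1}` is an orthonormal basis of
`V⁰_N = {x : ∑ x_k = 0}` and `D = diag(Λ₁,…,Λ_N)` with `Λ_k > 0`, then
`det(⟨w_a, D w_b⟩) ≥ (Λ₁⋯Λ_N)^{(N−1)/N}`. -/
theorem diag_compression_det_lower_bound (N : ℕ) (hN : 2 ≤ N) (Λ : Fin N → ℝ)
    (hΛ : ∀ k, 0 < Λ k) (w : Fin (N - 1) → Fin N → ℝ)
    (hzero : ∀ a, (∑ k, w a k) = 0)
    (hortho : ∀ a b, (∑ k, w a k * w b k) = if a = b then (1 : ℝ) else 0) :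
    (∏ k, Λ k) ^ (((N : ℝ) - 1) / N) ≤
      Matrix.det (Matrix.of fun a b : Fin (N - 1) => ∑ k, w a k * Λ k * w b k) := by
  classical
  have hN0 : (0:ℝ) < N := by positivity
  have hNne : (N:ℝ) ≠ 0 := hN0.ne'
  set uval : ℝ := (Real.sqrt N)⁻¹ with huval
  have hu2 : uval * uval = (N:ℝ)⁻¹ := by
    rw [huval, ← mul_inv, Real.mul_self_sqrt hN0.le]
  set Mb : Matrix (Fin (N-1)) (Fin (N-1)) ℝ :=
    Matrix.of fun a b : Fin (N - 1) => ∑ k, w a k * Λ k * w b k with hMb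
  -- positive definiteness of Mb
  have hMbPD : Mb.PosDef := by
    constructor
    · ext a b
      simp only [Mb, conjTranspose_apply, Matrix.of_apply, star_trivial]
      exact Finset.sum_congr rfl fun k _ => by ring
    · intro x hx
      have key : x ⬝ᵥ (Mb *ᵥ x) = ∑ k, Λ k * (∑ a, x a * w a k)^2 := by
        have step : ∀ k, Λ k * (∑ a, x a * w a k)^2
            = ∑ a, ∑ b, x a * (w a k * Λ k * w b k * x b) := by
          intro k
          rw [pow_two, Finset.sum_mul_sum, Finset.mul_sum]
          refine Finset.sum_congr rfl fun a _ => ?_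
          rw [Finset.mul_sum]
          exact Finset.sum_congr rfl fun b _ => by ring
        calc x ⬝ᵥ (Mb *ᵥ x)
            = ∑ a, ∑ b, ∑ k, x a * (w a k * Λ k * w b k * x b) := by
              simp only [Mb, dotProduct, mulVec, Matrix.of_apply]
              refine Finset.sum_congr rfl fun a _ => ?_
              rw [Finset.mul_sum]
              refine Finset.sum_congr rfl fun b _ => ?_
              rw [Finset.sum_mul, Finset.mul_sum]
          _ = ∑ a, ∑ k, ∑ b, x a * (w a k * Λ k * w b k * x b) :=
              Finset.sum_congr rfl fun a _ => Finset.sum_comm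
          _ = ∑ k, ∑ a, ∑ b, x a * (w a k * Λ k * w b k * x b) := Finset.sum_comm
          _ = ∑ k, Λ k * (∑ a, x a * w a k)^2 :=
              Finset.sum_congr rfl fun k _ => (step k).symm
      have hg : ∃ k, (∑ a, x a * w a k) ≠ 0 := by
        by_contra hg
        push_neg at hg
        apply hx
        ext b
        have h1 : x b = ∑ a, x a * (∑ k, w a k * w b k) := by
          simp only [hortho, mul_ite, mul_one, mul_zero]
          rw [Finset.sum_ite_eq' Finset.univ b x]
          simp
        have h2 : (∑ a, x a * (∑ k, w a k * w b k))
            = ∑ k, (∑ a, x a * w a k) * w b k := by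
          calc ∑ a, x a * (∑ k, w a k * w b k)
              = ∑ a, ∑ k, x a * w a k * w b k := by
                refine Finset.sum_congr rfl fun a _ => ?_
                rw [Finset.mul_sum]
                exact Finset.sum_congr rfl fun k _ => by ring
            _ = ∑ k, ∑ a, x a * w a k * w b k := Finset.sum_comm
            _ = ∑ k, (∑ a, x a * w a k) * w b k :=
                Finset.sum_congr rfl fun k _ => by rw [Finset.sum_mul]
        rw [h1, h2]
        simp [hg]
      obtain ⟨k0, hk0⟩ := hg
      simp only [star_trivial]
      rw [show (x.sum fun i xi => x.sum fun j xj => xi * Mb i j * xj) = ⇑x ⬝ᵥ (Mb *ᵥ ⇑x) by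
        simp [dotProduct, mulVec, Finsupp.sum_fintype, Finset.mul_sum, mul_assoc], key]
      refine Finset.sum_pos' (fun k _ => mul_nonneg (hΛ k).le (sq_nonneg _))
        ⟨k0, Finset.mem_univ _, mul_pos (hΛ k0) (by positivity)⟩
  haveI : Invertible Mb := hMbPD.isUnit.invertible
  -- the extended orthogonal matrix
  set Q : Matrix (Fin (N-1) ⊕ Unit) (Fin N) ℝ := Matrix.of (Sum.elim w fun _ _ => uval) with hQ
  set D : Matrix (Fin N) (Fin N) ℝ := Matrix.diagonal Λ with hD
  set D' : Matrix (Fin N) (Fin N) ℝ := Matrix.diagonal (fun k => (Λ k)⁻¹) with hD'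
  have hQQt : Q * Qᵀ = 1 := by
    ext i j
    rcases i with a | i <;> rcases j with b | j <;>
      simp only [Q, mul_apply, transpose_apply, Matrix.of_apply, Sum.elim_inl, Sum.elim_inr,
        one_apply]
    · rw [hortho a b]; simp [Sum.inl.injEq]
    · rw [← Finset.sum_mul, hzero a]; simp
    · rw [← Finset.mul_sum, hzero b]; simp
    · simp only [Finset.sum_const, Finset.card_univ, Fintype.card_fin, nsmul_eq_mul, hu2]
      rw [mul_inv_cancel₀ hNne]
      simp
  have e : (Fin (N-1) ⊕ Unit) ≃ Fin N := by
    apply Fintype.equivOfCardEq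
    simp only [Fintype.card_sum, Fintype.card_fin, Fintype.card_unit]
    omega
  set Q₀ : Matrix (Fin N) (Fin N) ℝ := Q.submatrix e.symm id with hQ₀
  have hQeq : Q = Q₀.submatrix e id := by ext i k; simp [Q₀]
  have hQ₀Q₀t : Q₀ * Q₀ᵀ = 1 := by
    rw [hQ₀, transpose_submatrix, ← Matrix.submatrix_mul Q Qᵀ e.symm id e.symm
      Function.bijective_id, hQQt, Matrix.submatrix_one_equiv e.symm]
  have hQtQ : Qᵀ * Q = 1 := by
    have h1 : Q₀ᵀ * Q₀ = 1 := mul_eq_one_comm.mp hQ₀Q₀t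
    calc Qᵀ * Q = Q₀ᵀ.submatrix id e * Q₀.submatrix e id := by
          rw [hQeq, transpose_submatrix]
      _ = (Q₀ᵀ * Q₀).submatrix id id :=
          (Matrix.submatrix_mul Q₀ᵀ Q₀ id e id e.bijective).symm
      _ = 1 := by rw [h1, Matrix.submatrix_id_id]
  -- S and T
  set S := Q * D * Qᵀ with hS
  set T := Q * D' * Qᵀ with hT
  have hdetS : S.det = ∏ k, Λ k := by
    have h2 : S = (Q₀ * D * Q₀ᵀ).submatrix e e := by
      rw [hS, hQeq, transpose_submatrix]
      rw [Matrix.submatrix_mul (Q₀ * D) Q₀ᵀ e id e Function.bijective_id,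
        Matrix.submatrix_mul Q₀ D e id id Function.bijective_id, Matrix.submatrix_id_id]
    rw [h2, Matrix.det_submatrix_equiv_self, det_mul, det_mul]
    have : Q₀.det * Q₀ᵀ.det = 1 := by rw [← det_mul, hQ₀Q₀t, det_one]
    rw [mul_comm Q₀.det D.det, mul_assoc, this, mul_one, hD, det_diagonal]
  have hST : S * T = 1 := by
    rw [hS, hT]
    calc Q * D * Qᵀ * (Q * D' * Qᵀ) = Q * D * (Qᵀ * Q) * D' * Qᵀ := by
          simp only [Matrix.mul_assoc]
      _ = Q * (D * D') * Qᵀ := by rw [hQtQ, Matrix.mul_one]; simp only [Matrix.mul_assoc]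
      _ = 1 := by
          rw [hD, hD', diagonal_mul_diagonal]
          have : (fun k => Λ k * (Λ k)⁻¹) = fun _ => (1:ℝ) := by
            funext k; exact mul_inv_cancel₀ (hΛ k).ne'
          rw [this, diagonal_one, Matrix.mul_one, hQQt]
  -- block decompositions
  set Bb : Matrix (Fin (N-1)) Unit ℝ := Matrix.of fun a _ => ∑ k, w a k * Λ k * uval with hBb
  set Cb : Matrix Unit (Fin (N-1)) ℝ := Matrix.of fun _ b => ∑ k, uval * Λ k * w b k with hCb
  set Db : Matrix Unit Unit ℝ := Matrix.of fun _ _ => ∑ k, uval * Λ k * uval with hDb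
  set Mb' : Matrix (Fin (N-1)) (Fin (N-1)) ℝ :=
    Matrix.of fun a b => ∑ k, w a k * (Λ k)⁻¹ * w b k with hMb'
  set Bb' : Matrix (Fin (N-1)) Unit ℝ := Matrix.of fun a _ => ∑ k, w a k * (Λ k)⁻¹ * uval with hBb'
  set Cb' : Matrix Unit (Fin (N-1)) ℝ := Matrix.of fun _ b => ∑ k, uval * (Λ k)⁻¹ * w b k with hCb'
  set Tb : Matrix Unit Unit ℝ := Matrix.of fun _ _ => ∑ k, uval * (Λ k)⁻¹ * uval with hTb
  have hSentry : ∀ i j, S i j = ∑ k, Q i k * Λ k * Q j k := by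
    intro i j
    rw [hS, hD, Matrix.mul_apply]
    simp only [Matrix.mul_diagonal, Matrix.transpose_apply]
  have hTentry : ∀ i j, T i j = ∑ k, Q i k * (Λ k)⁻¹ * Q j k := by
    intro i j
    rw [hT, hD', Matrix.mul_apply]
    simp only [Matrix.mul_diagonal, Matrix.transpose_apply]
  have hSblock : S = Matrix.fromBlocks Mb Bb Cb Db := by
    ext i j
    rcases i with a | i <;> rcases j with b | j <;>
      simp [hSentry, Q, hMb, hBb, hCb, hDb]
  have hTblock : T = Matrix.fromBlocks Mb' Bb' Cb' Tb := by
    ext i j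
    rcases i with a | i <;> rcases j with b | j <;>
      simp [hTentry, Q, hMb', hBb', hCb', hTb]
  -- extract block equations from S * T = 1
  have hmul := hST
  rw [hSblock, hTblock, Matrix.fromBlocks_multiply, ← Matrix.fromBlocks_one] at hmul
  have h12 : Mb * Bb' + Bb * Tb = 0 := by
    have := congrArg Matrix.toBlocks₁₂ hmul
    simpa only [Matrix.toBlocks_fromBlocks₁₂] using this
  have h22 : Cb * Bb' + Db * Tb = 1 := by
    have := congrArg Matrix.toBlocks₂₂ hmul
    simpa only [Matrix.toBlocks_fromBlocks₂₂] using this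
  have hdetMb : IsUnit Mb.det := hMbPD.det_pos.ne'.isUnit
  have hinv : Mb⁻¹ * Mb = 1 := Matrix.nonsing_inv_mul Mb hdetMb
  have hBbTb : Bb * Tb = -(Mb * Bb') := by
    rw [← neg_eq_of_add_eq_zero_right h12]
  have hSchurT : (Db - Cb * Mb⁻¹ * Bb) * Tb = 1 := by
    calc (Db - Cb * Mb⁻¹ * Bb) * Tb
        = Db * Tb - Cb * (Mb⁻¹ * (Bb * Tb)) := by
          rw [Matrix.sub_mul]; simp only [Matrix.mul_assoc]
      _ = Db * Tb + Cb * (Mb⁻¹ * (Mb * Bb')) := by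
          rw [hBbTb, Matrix.mul_neg, Matrix.mul_neg, sub_neg_eq_add]
      _ = Db * Tb + Cb * Bb' := by
          rw [← Matrix.mul_assoc Mb⁻¹ Mb, hinv, Matrix.one_mul]
      _ = 1 := by rw [add_comm]; exact h22
  have hSchurDet : S.det = Mb.det * (Db - Cb * Mb⁻¹ * Bb).det := by
    rw [hSblock, Matrix.det_fromBlocks₁₁, Matrix.invOf_eq_nonsing_inv]
  have hdetT1 : (Db - Cb * Mb⁻¹ * Bb).det * Tb.det = 1 := by
    rw [← Matrix.det_mul, hSchurT, Matrix.det_one]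
  have hMbdet : Mb.det = (∏ k, Λ k) * Tb.det := by
    calc Mb.det = Mb.det * ((Db - Cb * Mb⁻¹ * Bb).det * Tb.det) := by
          rw [hdetT1, mul_one]
      _ = (Mb.det * (Db - Cb * Mb⁻¹ * Bb).det) * Tb.det := by ring
      _ = (∏ k, Λ k) * Tb.det := by rw [← hSchurDet, hdetS]
  -- value of Tb.det
  have hTbdet : Tb.det = ∑ k, (N:ℝ)⁻¹ * (Λ k)⁻¹ := by
    rw [Matrix.det_unique, hTb]
    simp only [Matrix.of_apply]
    refine Finset.sum_congr rfl fun k _ => ?_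
    rw [show uval * (Λ k)⁻¹ * uval = uval * uval * (Λ k)⁻¹ from by ring, hu2]
  -- AM-GM
  have hPpos : 0 < ∏ k, Λ k := Finset.prod_pos fun k _ => hΛ k
  have hamgm : ((∏ k, Λ k)⁻¹) ^ ((N:ℝ)⁻¹) ≤ ∑ k, (N:ℝ)⁻¹ * (Λ k)⁻¹ := by
    have h := Real.geom_mean_le_arith_mean_weighted Finset.univ (fun _ => (N:ℝ)⁻¹)
      (fun k => (Λ k)⁻¹) (fun i _ => by positivity)
      (by simp only [Finset.sum_const, Finset.card_univ, Fintype.card_fin, nsmul_eq_mul]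
          field_simp)
      (fun i _ => inv_nonneg.mpr (hΛ i).le)
    rw [Real.finset_prod_rpow _ _ (fun i _ => inv_nonneg.mpr (hΛ i).le) _] at h
    rw [← Finset.prod_inv_distrib]
    simpa using h
  -- conclude
  have hstep : (∏ k, Λ k) ^ (-(N:ℝ)⁻¹) ≤ Tb.det := by
    rw [hTbdet, Real.rpow_neg hPpos.le, ← Real.inv_rpow hPpos.le]
    exact hamgm
  have hexp : ((N : ℝ) - 1) / N = 1 + -(N:ℝ)⁻¹ := by field_simp; ring
  calc (∏ k, Λ k) ^ (((N : ℝ) - 1) / N)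
      = (∏ k, Λ k) * (∏ k, Λ k) ^ (-(N:ℝ)⁻¹) := by
        rw [hexp, Real.rpow_add hPpos, Real.rpow_one]
    _ ≤ (∏ k, Λ k) * Tb.det := by
        exact mul_le_mul_of_nonneg_left hstep hPpos.le
    _ = Mb.det := hMbdet.symm
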